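/- Let 0 < α_2 < α_1 < 1/2, M > 0 and α_2 M/(1−α_1) ≤ r ≤ M. Then the unique maximizer of E(γ_1,γ_2) = γ_1 + γ_2 over Ω_r = { (γ_1,γ_2) ∈ ℝ² : 0 ≤ γ_1 ≤ r, 0 ≤ γ_2 ≤ M, α_1γ_1 + α_2γ_2 ≤ α_1 M/(1−α_2), (1−α_1)γ_1 + (1−α_2)γ_2 ≤ M } is (γ̂_1, γ̂_2) = ( r, (M − (1−α_1) r)/(1−α_2) ); consequently α_1 γ̂_1 + α_2 γ̂_2 = ((α_1 − α_2) r + α_2 M)/(1−α_2) and (1−α_1) γ̂_1 + (1−α_2) γ̂_2 = M. In particular, for r = M the maximizer is (M, α_1 M/(1−α_2)), recovering the equilibrium configuration. -/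

import Mathlib

open Set

/-- The flux maximization problem of Appendix B: for `0 < α₂ < α₁ < 1/2`,
`M > 0` and `α₂M/(1−α₁) ≤ r ≤ M`, the unique maximizer of `E(γ₁,γ₂)=γ₁+γ₂`
over `Ω_r` is `(r, (M − (1−α₁)r)/(1−α₂))`; the outgoing fluxes are
`((α₁−α₂)r + α₂M)/(1−α₂)` and `M`, and for `r = M` one recovers the
equilibrium configuration `(M, α₁M/(1−α₂))`. -/
theorem stmt14 (α₁ α₂ M r : ℝ)
    (h₂ : 0 < α₂) (h₂₁ : α₂ < α₁) (h₁ : α₁ < 1/2) (hM : 0 < M)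
    (hr₁ : α₂ * M / (1 - α₁) ≤ r) (hr₂ : r ≤ M)
    (Ω : Set (ℝ × ℝ))
    (hΩ : Ω = {p | 0 ≤ p.1 ∧ p.1 ≤ r ∧ 0 ≤ p.2 ∧ p.2 ≤ M ∧
      α₁ * p.1 + α₂ * p.2 ≤ α₁ * M / (1 - α₂) ∧
      (1 - α₁) * p.1 + (1 - α₂) * p.2 ≤ M}) :
    ((r, (M - (1 - α₁) * r) / (1 - α₂)) : ℝ × ℝ) ∈ Ω ∧
    (∀ q ∈ Ω, q.1 + q.2 ≤ r + (M - (1 - α₁) * r) / (1 - α₂)) ∧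
    (∀ q ∈ Ω, (∀ q' ∈ Ω, q'.1 + q'.2 ≤ q.1 + q.2) →
      q = ((r, (M - (1 - α₁) * r) / (1 - α₂)) : ℝ × ℝ)) ∧
    (α₁ * r + α₂ * ((M - (1 - α₁) * r) / (1 - α₂)) =
      ((α₁ - α₂) * r + α₂ * M) / (1 - α₂)) ∧
    ((1 - α₁) * r + (1 - α₂) * ((M - (1 - α₁) * r) / (1 - α₂)) = M) ∧
    (r = M → (M - (1 - α₁) * r) / (1 - α₂) = α₁ * M / (1 - α₂)) := by
  have ha1 : 0 < 1 - α₁ := by linarith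
  have hb1 : 0 < 1 - α₂ := by linarith
  set g : ℝ := (M - (1 - α₁) * r) / (1 - α₂) with hgdef
  have hg : (1 - α₂) * g = M - (1 - α₁) * r := by
    rw [hgdef]; field_simp [hb1.ne']
  have hr0 : 0 < r := lt_of_lt_of_le (by positivity) hr₁
  have hr₁' : α₂ * M ≤ (1 - α₁) * r := by
    have := (div_le_iff₀ ha1).mp hr₁
    linarith [this]
  have hmem : ((r, g) : ℝ × ℝ) ∈ Ω := by
    rw [hΩ]
    refine ⟨hr0.le, le_refl r, ?_, ?_, ?_, ?_⟩
    · rw [hgdef]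
      apply div_nonneg _ hb1.le
      nlinarith
    · rw [← mul_le_mul_iff_right₀ hb1, hg]; nlinarith
    · simp only
      rw [le_div_iff₀ hb1]
      nlinarith [hg]
    · simp only [hg]; ring_nf; linarith
  have hub : ∀ q ∈ Ω, q.1 + q.2 ≤ r + g := by
    intro q hq
    rw [hΩ] at hq
    obtain ⟨h1, h2, h3, h4, h5, h6⟩ := hq
    rw [← mul_le_mul_iff_right₀ hb1]
    nlinarith [hg]
  refine ⟨hmem, hub, ?_, by rw [eq_div_iff hb1.ne']; linear_combination α₂ * hg, by linarith [hg], ?_⟩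
  · intro q hq hmax
    have h1 := hmax _ hmem
    have h2 := hub q hq
    have heq : q.1 + q.2 = r + g := le_antisymm h2 (by simpa using h1)
    rw [hΩ] at hq
    obtain ⟨k1, k2, k3, k4, k5, k6⟩ := hq
    have hq1 : q.1 = r := by nlinarith [hg]
    have hq2 : q.2 = g := by linarith
    exact Prod.ext hq1 hq2
  · intro h
    rw [hgdef, h]; congr 1; ring
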